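/- Let h : [0, 2π] → ℝ be twice continuously differentiable with h(0) = h(2π) and h'(0) = h'(2π). Then for every ξ ∈ (0, 2π): ∫₀^{2π} G(θ, ξ) h''(θ) dθ = −h(ξ) + (1/(2π)) ∫₀^{2π} h(θ) dθ. -/

import Mathlib

open scoped Real

/-- Green's kernel `G(θ, ξ) = (1/(4π))(ξ − θ)² + min(ξ, θ) − (1/2)(ξ + θ) + π/3`. -/
noncomputable def greenKernel (θ ξ : ℝ) : ℝ :=
  (1 / (4 * π)) * (ξ - θ) ^ 2 + min ξ θ - (1 / 2) * (ξ + θ) + π / 3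

private lemma poly_hasDerivAt (a b c ξ x : ℝ) :
    HasDerivAt (fun θ : ℝ => a * (ξ - θ) ^ 2 + b * θ + c) (-(2 * a) * (ξ - x) + b) x := by
  have h1 : HasDerivAt (fun θ : ℝ => ξ - θ) (-1) x := by
    exact ((hasDerivAt_const x ξ).sub (hasDerivAt_id x)).congr_deriv (by norm_num)
  have h3 := (((h1.pow 2).const_mul a).add ((hasDerivAt_id x).const_mul b)).add_const c
  exact h3.congr_deriv (by push_cast; ring)

private lemma lin_hasDerivAt (a b ξ x : ℝ) :
    HasDerivAt (fun θ : ℝ => -(2 * a) * (ξ - θ) + b) (2 * a) x := by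
  have h1 : HasDerivAt (fun θ : ℝ => ξ - θ) (-1) x := by
    exact ((hasDerivAt_const x ξ).sub (hasDerivAt_id x)).congr_deriv (by norm_num)
  have := (h1.const_mul (-(2 * a))).add_const b
  exact this.congr_deriv (by push_cast; ring)

private lemma ibp_piece (h : ℝ → ℝ) (hreg : ContDiff ℝ 2 h) (a b c ξ s t : ℝ) :
    ∫ θ in s..t, (a * (ξ - θ) ^ 2 + b * θ + c) * deriv (deriv h) θ =
      ((a * (ξ - t) ^ 2 + b * t + c) * deriv h t - (-(2 * a) * (ξ - t) + b) * h t)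
      - ((a * (ξ - s) ^ 2 + b * s + c) * deriv h s - (-(2 * a) * (ξ - s) + b) * h s)
      + (2 * a) * ∫ θ in s..t, h θ := by
  have h2 : ContDiff ℝ ((1 : ℕ∞) + 1) h := by exact_mod_cast hreg
  have hdh : ContDiff ℝ 1 (deriv h) := (contDiff_succ_iff_deriv.mp h2).2.2
  have hd : Differentiable ℝ h := hreg.differentiable two_ne_zero
  have hd' : Differentiable ℝ (deriv h) := hdh.differentiable one_ne_zero
  have hcdd : Continuous (deriv (deriv h)) := by
    have h1 : ContDiff ℝ ((0 : ℕ∞) + 1) (deriv h) := by exact_mod_cast hdh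
    exact ((contDiff_succ_iff_deriv.mp h1).2.2).continuous
  have hch : Continuous h := hreg.continuous
  have hcdh : Continuous (deriv h) := hdh.continuous
  have ibp1 : ∫ θ in s..t, (a * (ξ - θ) ^ 2 + b * θ + c) * deriv (deriv h) θ =
      (a * (ξ - t) ^ 2 + b * t + c) * deriv h t - (a * (ξ - s) ^ 2 + b * s + c) * deriv h s
      - ∫ θ in s..t, (-(2 * a) * (ξ - θ) + b) * deriv h θ := by
    apply intervalIntegral.integral_mul_deriv_eq_deriv_mul
    · intro x _; exact poly_hasDerivAt a b c ξ x
    · intro x _; exact (hd' x).hasDerivAt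
    · exact (Continuous.intervalIntegrable (by continuity) s t)
    · exact hcdd.intervalIntegrable s t
  have ibp2 : ∫ θ in s..t, (-(2 * a) * (ξ - θ) + b) * deriv h θ =
      (-(2 * a) * (ξ - t) + b) * h t - (-(2 * a) * (ξ - s) + b) * h s
      - ∫ θ in s..t, (2 * a) * h θ := by
    apply intervalIntegral.integral_mul_deriv_eq_deriv_mul
    · intro x _; exact lin_hasDerivAt a b ξ x
    · intro x _; exact (hd x).hasDerivAt
    · exact (Continuous.intervalIntegrable (by continuity) s t)
    · exact hcdh.intervalIntegrable s t
  have hconst : ∫ θ in s..t, (2 * a) * h θ = (2 * a) * ∫ θ in s..t, h θ :=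
    intervalIntegral.integral_const_mul _ _
  rw [ibp1, ibp2, hconst]
  ring

/-- If `h` is twice continuously differentiable with periodic boundary conditions
`h(0) = h(2π)`, `h'(0) = h'(2π)`, then for every `ξ ∈ (0, 2π)`,
`∫₀^{2π} G(θ, ξ) h''(θ) dθ = −h(ξ) + (1/(2π)) ∫₀^{2π} h(θ) dθ`. -/
theorem greenKernel_reproduces (h : ℝ → ℝ) (hreg : ContDiff ℝ 2 h)
    (hper : h 0 = h (2 * π)) (hper' : deriv h 0 = deriv h (2 * π))
    (ξ : ℝ) (hξ : ξ ∈ Set.Ioo (0 : ℝ) (2 * π)) :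
    ∫ θ in (0 : ℝ)..(2 * π), greenKernel θ ξ * deriv (deriv h) θ =
      -h ξ + (1 / (2 * π)) * ∫ θ in (0 : ℝ)..(2 * π), h θ := by
  obtain ⟨hξ0, hξ2π⟩ := hξ
  have hπ : (0 : ℝ) < π := Real.pi_pos
  have h2 : ContDiff ℝ ((1 : ℕ∞) + 1) h := by exact_mod_cast hreg
  have hdh : ContDiff ℝ 1 (deriv h) := (contDiff_succ_iff_deriv.mp h2).2.2
  have hcdd : Continuous (deriv (deriv h)) := by
    have h1 : ContDiff ℝ ((0 : ℕ∞) + 1) (deriv h) := by exact_mod_cast hdh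
    exact ((contDiff_succ_iff_deriv.mp h1).2.2).continuous
  have hch : Continuous h := hreg.continuous
  set a : ℝ := 1 / (4 * π) with ha
  -- continuity of the kernel in θ
  have hGcont : Continuous (fun θ => greenKernel θ ξ * deriv (deriv h) θ) := by
    apply Continuous.mul _ hcdd
    unfold greenKernel
    exact (((continuous_const.mul ((continuous_const.sub continuous_id).pow 2)).add
      (continuous_const.min continuous_id)).sub
      (continuous_const.mul (continuous_const.add continuous_id))).add continuous_const
  -- split the integral at ξ
  have hsplit : ∫ θ in (0 : ℝ)..(2 * π), greenKernel θ ξ * deriv (deriv h) θ =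
      (∫ θ in (0 : ℝ)..ξ, greenKernel θ ξ * deriv (deriv h) θ)
      + ∫ θ in ξ..(2 * π), greenKernel θ ξ * deriv (deriv h) θ := by
    rw [intervalIntegral.integral_add_adjacent_intervals
      (hGcont.intervalIntegrable 0 ξ) (hGcont.intervalIntegrable ξ (2 * π))]
  have hsplith : ∫ θ in (0 : ℝ)..(2 * π), h θ =
      (∫ θ in (0 : ℝ)..ξ, h θ) + ∫ θ in ξ..(2 * π), h θ := by
    rw [intervalIntegral.integral_add_adjacent_intervals
      (hch.intervalIntegrable 0 ξ) (hch.intervalIntegrable ξ (2 * π))]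
  -- first piece: θ ∈ [0, ξ], min ξ θ = θ
  have hpiece1 : ∫ θ in (0 : ℝ)..ξ, greenKernel θ ξ * deriv (deriv h) θ =
      ∫ θ in (0 : ℝ)..ξ, (a * (ξ - θ) ^ 2 + (1 / 2) * θ + (π / 3 - ξ / 2)) * deriv (deriv h) θ := by
    apply intervalIntegral.integral_congr
    intro θ hθ
    rw [Set.uIcc_of_le hξ0.le] at hθ
    have : min ξ θ = θ := min_eq_right hθ.2
    unfold greenKernel
    dsimp only
    rw [this]; ring
  have hpiece2 : ∫ θ in ξ..(2 * π), greenKernel θ ξ * deriv (deriv h) θ =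
      ∫ θ in ξ..(2 * π), (a * (ξ - θ) ^ 2 + (-(1 / 2)) * θ + (π / 3 + ξ / 2)) * deriv (deriv h) θ := by
    apply intervalIntegral.integral_congr
    intro θ hθ
    rw [Set.uIcc_of_le hξ2π.le] at hθ
    have : min ξ θ = ξ := min_eq_left hθ.1
    unfold greenKernel
    dsimp only
    rw [this]; ring
  rw [hsplit, hpiece1, hpiece2, ibp_piece h hreg a (1/2) (π/3 - ξ/2) ξ 0 ξ,
    ibp_piece h hreg a (-(1/2)) (π/3 + ξ/2) ξ ξ (2*π), hsplith]
  rw [hper, hper', ha]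
  have hπ' : π ≠ 0 := hπ.ne'
  generalize (∫ θ in (0:ℝ)..ξ, h θ) = I1
  generalize (∫ θ in ξ..(2*π), h θ) = I2
  generalize h ξ = A
  generalize deriv h ξ = B
  generalize h (2*π) = C
  generalize deriv h (2*π) = D
  field_simp
  ring
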